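/- arXiv:1504.00953 — 3 statements merged into one kernel-verified Lean document; each statement's English description precedes it below -/
import Mathlib

section
/- For any T > 0, r > 0 and path loss exponent α = 4, the integral ∫_r^∞ (T/(T + (x/r)^4)) x dx equals (r²√T/2)·arctan(√T). -/
open Real Set

/-- For `T > 0`, `r > 0` and path loss exponent `α = 4`,
`∫_r^∞ (T / (T + (x/r)^4)) x dx = (r² √T / 2) · arctan √T`. -/
theorem interference_integral_alpha_four (T r : ℝ) (hT : 0 < T) (hr : 0 < r) :
    ∫ x in Set.Ioi r, (T / (T + (x / r) ^ 4)) * x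
      = (r ^ 2 * Real.sqrt T / 2) * Real.arctan (Real.sqrt T) := by
  have hsT : 0 < Real.sqrt T := Real.sqrt_pos.2 hT
  set c : ℝ := r ^ 2 * Real.sqrt T with hc
  have hcpos : 0 < c := by positivity
  set f : ℝ → ℝ := fun x => (c / 2) * Real.arctan (x ^ 2 / c) with hf
  have hderiv : ∀ x ∈ Ioi r, HasDerivAt f ((T / (T + (x / r) ^ 4)) * x) x := by
    intro x hx
    have hxpos : 0 < x := hr.trans hx
    have h1 : HasDerivAt (fun x : ℝ => x ^ 2 / c) (2 * x / c) x := by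
      simpa using (hasDerivAt_pow 2 x).div_const c
    have h2 := (Real.hasDerivAt_arctan (x ^ 2 / c)).comp x h1
    have h3 := h2.const_mul (c / 2)
    convert h3 using 1
    case e'_4 => rfl
    case e'_5 => rfl
    case e'_8 => rfl
    have hden : 0 < T + (x / r) ^ 4 := by positivity
    have hsq : Real.sqrt T ^ 2 = T := Real.sq_sqrt hT.le
    rw [show T = Real.sqrt T ^ 2 from hsq.symm]
    rw [hc]
    field_simp
  have hnonneg : ∀ x ∈ Ioi r, 0 ≤ (T / (T + (x / r) ^ 4)) * x := by
    intro x hx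
    have hxpos : 0 < x := hr.trans hx
    positivity
  have hcont : ContinuousWithinAt f (Ici r) r :=
    (continuous_const.mul
      (Real.continuous_arctan.comp ((continuous_pow 2).div_const c))).continuousWithinAt
  have htend : Filter.Tendsto f Filter.atTop (nhds ((c / 2) * (π / 2))) := by
    apply Filter.Tendsto.const_mul
    apply (Real.tendsto_arctan_atTop.mono_right nhdsWithin_le_nhds).comp
    apply Filter.Tendsto.atTop_div_const hcpos
    exact Filter.tendsto_pow_atTop (by norm_num)
  have key := MeasureTheory.integral_Ioi_of_hasDerivAt_of_nonneg hcont hderiv hnonneg htend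
  rw [key]
  have : f r = (c / 2) * Real.arctan ((Real.sqrt T)⁻¹) := by
    simp only [hf, hc]
    congr 2
    field_simp
  rw [this, Real.arctan_inv_of_pos hsT]
  ring
end

section
/- In the interference-limited three-node full-duplex scenario with α₁ = α₂ = 4 and P_b = P_u, the outage probability expression 1 − 2πλ ∫_0^∞ r exp(−λπr²) · exp(−2πλ ∫_r^∞ (T x/(T + (x/r)^4)) dx) · exp(−2πλ ∫_0^∞ (T y/(T + (y/r)^4)) dy) dr equals 1 − 1/(1 + √T·(arctan(√T) + π/2)), and in particular is independent of the density λ > 0. -/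
open Real Set MeasureTheory Filter Topology

lemma aux_inner (T r a : ℝ) (hT : 0 < T) (hr : 0 < r) (ha : 0 ≤ a) :
    ∫ x in Set.Ioi a, T * x / (T + (x / r) ^ 4)
      = r ^ 2 * Real.sqrt T / 2 * (π / 2 - Real.arctan (a ^ 2 / (r ^ 2 * Real.sqrt T))) := by
  have hs : 0 < Real.sqrt T := Real.sqrt_pos.mpr hT
  have hk : 0 < r ^ 2 * Real.sqrt T := by positivity
  have hsq : Real.sqrt T ^ 2 = T := Real.sq_sqrt hT.le
  set g : ℝ → ℝ := fun x => r ^ 2 * Real.sqrt T / 2 * Real.arctan (x ^ 2 / (r ^ 2 * Real.sqrt T))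
  have hderiv : ∀ x ∈ Set.Ici a, HasDerivAt g (T * x / (T + (x / r) ^ 4)) x := by
    intro x _
    have h1 : HasDerivAt (fun x : ℝ => x ^ 2 / (r ^ 2 * Real.sqrt T))
        (2 * x / (r ^ 2 * Real.sqrt T)) x := by
      simpa using (hasDerivAt_pow 2 x).div_const (r ^ 2 * Real.sqrt T)
    have h2 := (Real.hasDerivAt_arctan (x ^ 2 / (r ^ 2 * Real.sqrt T))).comp x h1
    have h3 := h2.const_mul (r ^ 2 * Real.sqrt T / 2)
    refine h3.congr_deriv (Eq.symm ?_)
    have hden : (0:ℝ) < T + (x / r) ^ 4 := by positivity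
    have hden2 : (0:ℝ) < 1 + (x ^ 2 / (r ^ 2 * Real.sqrt T)) ^ 2 := by positivity
    field_simp
    linear_combination (-(x ^ 5)) * hsq
  have htend : Tendsto g atTop (𝓝 (r ^ 2 * Real.sqrt T / 2 * (π / 2))) := by
    apply Tendsto.const_mul
    apply (Real.tendsto_arctan_atTop.mono_right nhdsWithin_le_nhds).comp
    exact (tendsto_pow_atTop two_ne_zero).atTop_div_const hk
  have hpos : ∀ x ∈ Set.Ioi a, 0 ≤ T * x / (T + (x / r) ^ 4) := by
    intro x hx
    have hx0 : 0 ≤ x := le_trans ha (le_of_lt hx)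
    positivity
  rw [integral_Ioi_of_hasDerivAt_of_nonneg' hderiv hpos htend]
  simp only [g]
  ring

lemma intA (T r : ℝ) (hT : 0 < T) (hr : 0 < r) :
    ∫ x in Set.Ioi r, T * x / (T + (x / r) ^ 4)
      = r ^ 2 * Real.sqrt T * Real.arctan (Real.sqrt T) / 2 := by
  have hs : 0 < Real.sqrt T := Real.sqrt_pos.mpr hT
  rw [aux_inner T r r hT hr hr.le]
  have h1 : r ^ 2 / (r ^ 2 * Real.sqrt T) = (Real.sqrt T)⁻¹ := by
    field_simp
  rw [h1, Real.arctan_inv_of_pos hs]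
  ring

lemma intB (T r : ℝ) (hT : 0 < T) (hr : 0 < r) :
    ∫ y in Set.Ioi (0:ℝ), T * y / (T + (y / r) ^ 4)
      = r ^ 2 * Real.sqrt T * π / 4 := by
  rw [aux_inner T r 0 hT hr le_rfl]
  simp
  ring

lemma intC (c : ℝ) (hc : 0 < c) :
    ∫ r in Set.Ioi (0:ℝ), r * Real.exp (-c * r ^ 2) = 1 / (2 * c) := by
  set g : ℝ → ℝ := fun r => -Real.exp (-c * r ^ 2) / (2 * c)
  have hderiv : ∀ x ∈ Set.Ici (0:ℝ), HasDerivAt g (x * Real.exp (-c * x ^ 2)) x := by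
    intro x _
    have h1 : HasDerivAt (fun x : ℝ => -c * x ^ 2) (-c * (2 * x)) x := by
      simpa using (hasDerivAt_pow 2 x).const_mul (-c)
    have h2 := ((h1.exp).neg.div_const (2 * c))
    refine h2.congr_deriv (Eq.symm ?_)
    field_simp
  have htend : Tendsto g atTop (𝓝 0) := by
    have : Tendsto (fun x : ℝ => -c * x ^ 2) atTop atBot := by
      apply Tendsto.const_mul_atTop_of_neg (neg_neg_iff_pos.mpr hc)
      exact tendsto_pow_atTop two_ne_zero
    have := (Real.tendsto_exp_atBot.comp this).neg.div_const (2 * c)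
    simpa [g, neg_mul] using this
  have hpos : ∀ x ∈ Set.Ioi (0:ℝ), 0 ≤ x * Real.exp (-c * x ^ 2) := by
    intro x hx
    have : (0:ℝ) < x := hx
    positivity
  rw [integral_Ioi_of_hasDerivAt_of_nonneg' hderiv hpos htend]
  simp only [g]
  norm_num
  field_simp

/-- In the interference-limited three-node FD scenario with `α₁ = α₂ = 4` and
`P_b = P_u`, the outage probability
`1 - 2πλ ∫_0^∞ r e^{-λπr²} e^{-2πλ ∫_r^∞ T x/(T+(x/r)⁴) dx} e^{-2πλ ∫_0^∞ T y/(T+(y/r)⁴) dy} dr`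
equals `1 - 1/(1 + √T (arctan √T + π/2))`; in particular it is independent of `λ > 0`. -/
theorem outage_three_node_closed_form (l T : ℝ) (hl : 0 < l) (hT : 0 < T) :
    1 - 2 * π * l * ∫ r in Set.Ioi (0 : ℝ),
        r * Real.exp (-l * π * r ^ 2)
          * Real.exp (-2 * π * l * ∫ x in Set.Ioi r, T * x / (T + (x / r) ^ 4))
          * Real.exp (-2 * π * l * ∫ y in Set.Ioi (0 : ℝ), T * y / (T + (y / r) ^ 4))
      = 1 - 1 / (1 + Real.sqrt T * (Real.arctan (Real.sqrt T) + π / 2)) := by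
  have hs : 0 < Real.sqrt T := Real.sqrt_pos.mpr hT
  have hat : 0 < Real.arctan (Real.sqrt T) := by
    rw [← Real.arctan_zero]; exact Real.arctan_strictMono hs
  set C : ℝ := 1 + Real.sqrt T * (Real.arctan (Real.sqrt T) + π / 2) with hC
  have hCpos : 0 < C := by
    have : 0 < π := Real.pi_pos
    positivity
  have hcpos : 0 < l * π * C := by positivity
  have hint : (∫ r in Set.Ioi (0 : ℝ),
        r * Real.exp (-l * π * r ^ 2)
          * Real.exp (-2 * π * l * ∫ x in Set.Ioi r, T * x / (T + (x / r) ^ 4))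
          * Real.exp (-2 * π * l * ∫ y in Set.Ioi (0 : ℝ), T * y / (T + (y / r) ^ 4)))
      = ∫ r in Set.Ioi (0:ℝ), r * Real.exp (-(l * π * C) * r ^ 2) := by
    apply setIntegral_congr_fun measurableSet_Ioi
    intro r hr
    have hr0 : (0:ℝ) < r := hr
    dsimp only
    rw [intA T r hT hr0, intB T r hT hr0, mul_assoc, mul_assoc, ← Real.exp_add, ← Real.exp_add]
    congr 2
    rw [hC]
    ring
  rw [hint, intC _ hcpos]
  rw [eq_comm]
  congr 1
  have hπ : π ≠ 0 := Real.pi_ne_zero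
  field_simp
end

section
/- Let Π₂⁰(T) = 1 − (πλ)²∫_0^∞ exp(−πλu(1+√T arctan√T)) ∫_0^∞ exp(−πλ(v + u√T arccot(v/(u√T)))) dv du and Π₃(T) = 1 − 1/(1+√T(arctan√T + π/2)). Then Π₂⁰(T) ≤ Π₃(T) for all T > 0. -/
open Real Set MeasureTheory

lemma exp_rate_integral {b : ℝ} (hb : 0 < b) :
    ∫ v in Set.Ioi (0 : ℝ), Real.exp (-(b * v)) = 1 / b := by
  have h := integral_comp_mul_left_Ioi (fun x => Real.exp (-x)) 0 hb
  simp only [mul_zero, integral_exp_neg_Ioi, neg_zero, Real.exp_zero, smul_eq_mul,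
    mul_one] at h
  simpa [one_div] using h

lemma exp_rate_integrable {b : ℝ} (hb : 0 < b) :
    IntegrableOn (fun v : ℝ => Real.exp (-(b * v))) (Set.Ioi 0) := by
  simpa [neg_mul] using exp_neg_integrableOn_Ioi 0 hb

set_option maxHeartbeats 4000000 in
/-- Let `Π₂⁰(T)` be the two-node FD outage with zero residual loop interference and
`Π₃(T) = 1 - 1/(1 + √T (arctan √T + π/2))` the three-node FD outage (both with
`α₁ = α₂ = 4`, `P_b = P_u`, zero noise). Then `Π₂⁰(T) ≤ Π₃(T)` for all `T > 0`. -/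
theorem two_node_outage_le_three_node (l : ℝ) (hl : 0 < l) :
    ∀ T : ℝ, 0 < T →
      1 - (π * l) ^ 2 * ∫ u in Set.Ioi (0 : ℝ),
          Real.exp (-π * l * u * (1 + Real.sqrt T * Real.arctan (Real.sqrt T))) *
            ∫ v in Set.Ioi (0 : ℝ),
              Real.exp (-π * l * (v + u * Real.sqrt T *
                (π / 2 - Real.arctan (v / (u * Real.sqrt T)))))
        ≤ 1 - 1 / (1 + Real.sqrt T * (Real.arctan (Real.sqrt T) + π / 2)) := by
  intro T hT
  set a : ℝ := π * l with ha
  have ha0 : 0 < a := mul_pos pi_pos hl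
  set s : ℝ := Real.sqrt T with hs
  have hs0 : 0 < s := Real.sqrt_pos.mpr hT
  have hat : 0 ≤ Real.arctan s := by
    rw [← Real.arctan_zero]; exact Real.arctan_strictMono.monotone hs0.le
  set c1 : ℝ := 1 + s * Real.arctan s with hc1
  have hc10 : 0 < c1 := by positivity
  set D : ℝ := 1 + s * (Real.arctan s + π / 2) with hD
  have hD0 : 0 < D := by
    have : 0 ≤ Real.arctan s + π / 2 := by positivity
    positivity
  -- inner integrand
  set g : ℝ → ℝ → ℝ := fun u v =>
    Real.exp (-π * l * (v + u * s * (π / 2 - Real.arctan (v / (u * s))))) with hg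
  -- pointwise bounds for inner integrand, u > 0
  have hg_le : ∀ u : ℝ, 0 < u → ∀ v : ℝ, g u v ≤ Real.exp (-(a * v)) := by
    intro u hu v
    apply Real.exp_le_exp.mpr
    have h1 : 0 ≤ u * s * (π / 2 - Real.arctan (v / (u * s))) := by
      have := Real.arctan_lt_pi_div_two (v / (u * s))
      have h2 : 0 ≤ π / 2 - Real.arctan (v / (u * s)) := by linarith
      positivity
    have he : -π * l * (v + u * s * (π / 2 - Real.arctan (v / (u * s))))
        = -(a * v) - a * (u * s * (π / 2 - Real.arctan (v / (u * s)))) := by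
      rw [ha]; ring
    rw [he]
    nlinarith [mul_nonneg ha0.le h1]
  have hg_ge : ∀ u : ℝ, 0 < u → ∀ v : ℝ, 0 < v →
      Real.exp (-(a * (s * (π / 2)) * u)) * Real.exp (-(a * v)) ≤ g u v := by
    intro u hu v hv
    have hat2 : 0 ≤ Real.arctan (v / (u * s)) := by
      rw [← Real.arctan_zero]
      exact Real.arctan_strictMono.monotone (by positivity)
    rw [← Real.exp_add]
    apply Real.exp_le_exp.mpr
    have h1 : Real.arctan (v / (u * s)) ≤ π / 2 :=
      (Real.arctan_lt_pi_div_two _).le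
    have h2 : u * s * (π / 2 - Real.arctan (v / (u * s))) ≤ u * s * (π / 2) := by
      apply mul_le_mul_of_nonneg_left _ (by positivity)
      linarith
    have he : -π * l * (v + u * s * (π / 2 - Real.arctan (v / (u * s))))
        = -(a * v) - a * (u * s * (π / 2 - Real.arctan (v / (u * s)))) := by
      rw [ha]; ring
    have he2 : -(a * (s * (π / 2)) * u) + -(a * v)
        = -(a * v) - a * (u * s * (π / 2)) := by ring
    rw [he, he2]
    have := mul_le_mul_of_nonneg_left h2 ha0.le
    linarith
  -- measurability of g (jointly)
  have hg_meas : Measurable (fun p : ℝ × ℝ => g p.1 p.2) := by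
    apply Real.measurable_exp.comp
    apply Measurable.const_mul
    apply Measurable.add measurable_snd
    apply Measurable.mul (measurable_fst.mul measurable_const)
    apply Measurable.const_sub
    exact Real.measurable_arctan.comp (measurable_snd.div (measurable_fst.mul measurable_const))
  have hg_meas_slice : ∀ u : ℝ, Measurable (g u) := by
    intro u
    apply Real.measurable_exp.comp
    apply Measurable.const_mul
    exact measurable_id.add
      ((((Real.measurable_arctan.comp (measurable_id.div_const (u * s))).const_sub
        (π / 2)).const_mul (u * s)))
  -- inner integrability for u > 0
  have hg_int : ∀ u : ℝ, 0 < u → IntegrableOn (g u) (Set.Ioi 0) := by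
    intro u hu
    apply (exp_rate_integrable ha0).mono' ((hg_meas_slice u).aestronglyMeasurable)
    filter_upwards with v
    rw [Real.norm_eq_abs, abs_of_nonneg (Real.exp_nonneg _)]
    exact hg_le u hu v
  -- inner lower bound
  have inner_ge : ∀ u : ℝ, 0 < u →
      Real.exp (-(a * (s * (π / 2)) * u)) * (1 / a) ≤ ∫ v in Set.Ioi (0:ℝ), g u v := by
    intro u hu
    have := integral_mono_of_nonneg (f := fun v =>
        Real.exp (-(a * (s * (π / 2)) * u)) * Real.exp (-(a * v)))
      (g := g u) (μ := volume.restrict (Set.Ioi 0))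
      (Filter.Eventually.of_forall fun v => by positivity)
      (hg_int u hu)
      (Filter.eventually_of_mem (self_mem_ae_restrict measurableSet_Ioi) (fun v hv => hg_ge u hu v hv))
    calc Real.exp (-(a * (s * (π / 2)) * u)) * (1 / a)
        = ∫ v in Set.Ioi (0:ℝ), Real.exp (-(a * (s * (π / 2)) * u)) * Real.exp (-(a * v)) := by
          rw [integral_const_mul, exp_rate_integral ha0]
      _ ≤ _ := this
  -- inner upper bound
  have inner_le : ∀ u : ℝ, 0 < u → (∫ v in Set.Ioi (0:ℝ), g u v) ≤ 1 / a := by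
    intro u hu
    rw [← exp_rate_integral ha0]
    exact integral_mono_of_nonneg
      (Filter.Eventually.of_forall fun v => Real.exp_nonneg _)
      (exp_rate_integrable ha0)
      (Filter.Eventually.of_forall fun v => hg_le u hu v)
  have inner_nonneg : ∀ u : ℝ, 0 ≤ ∫ v in Set.Ioi (0:ℝ), g u v := fun u =>
    integral_nonneg fun v => Real.exp_nonneg _
  -- outer integrand
  set F : ℝ → ℝ := fun u =>
    Real.exp (-π * l * u * c1) * ∫ v in Set.Ioi (0:ℝ), g u v with hF
  -- measurability of F
  have hF_meas : AEStronglyMeasurable F (volume.restrict (Set.Ioi 0)) := by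
    apply AEStronglyMeasurable.mul
    · exact (Real.measurable_exp.comp
        ((measurable_id.const_mul (-π * l)).mul_const c1)).aestronglyMeasurable
    · exact (hg_meas.stronglyMeasurable.integral_prod_right').aestronglyMeasurable
  -- integrability of F
  have hF_int : IntegrableOn F (Set.Ioi 0) := by
    have hbound : IntegrableOn (fun u => Real.exp (-((a * c1) * u)) * (1 / a)) (Set.Ioi 0) :=
      (exp_rate_integrable (by positivity)).mul_const _
    apply hbound.mono' hF_meas
    filter_upwards [self_mem_ae_restrict (measurableSet_Ioi)] with u hu
    rw [Real.norm_eq_abs, abs_of_nonneg (mul_nonneg (Real.exp_nonneg _) (inner_nonneg u))]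
    have h1 : Real.exp (-π * l * u * c1) = Real.exp (-((a * c1) * u)) := by rw [ha]; ring_nf
    rw [h1]
    exact mul_le_mul_of_nonneg_left (inner_le u hu) (Real.exp_nonneg _)
  -- lower bound of outer integral
  have outer_ge : 1 / (a ^ 2 * D) ≤ ∫ u in Set.Ioi (0:ℝ), F u := by
    have key := integral_mono_of_nonneg (f := fun u =>
        Real.exp (-((a * D) * u)) * (1 / a))
      (g := F) (μ := volume.restrict (Set.Ioi 0))
      (Filter.Eventually.of_forall fun u => by positivity)
      hF_int ?_
    · calc 1 / (a ^ 2 * D)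
          = ∫ u in Set.Ioi (0:ℝ), Real.exp (-((a * D) * u)) * (1 / a) := by
            rw [integral_mul_const, exp_rate_integral (by positivity : (0:ℝ) < a * D)]
            field_simp
        _ ≤ _ := key
    · filter_upwards [self_mem_ae_restrict (measurableSet_Ioi)] with u hu
      have h1 : Real.exp (-((a * D) * u))
          = Real.exp (-π * l * u * c1) * Real.exp (-(a * (s * (π / 2)) * u)) := by
        rw [← Real.exp_add]
        congr 1
        rw [hD, hc1, ha]
        ring
      calc Real.exp (-((a * D) * u)) * (1 / a)
          = Real.exp (-π * l * u * c1) * (Real.exp (-(a * (s * (π / 2)) * u)) * (1 / a)) := by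
            rw [h1]; ring
        _ ≤ F u := mul_le_mul_of_nonneg_left (inner_ge u hu) (Real.exp_nonneg _)
  -- finish
  have hfin : 1 / D ≤ a ^ 2 * ∫ u in Set.Ioi (0:ℝ), F u := by
    have := mul_le_mul_of_nonneg_left outer_ge (by positivity : (0:ℝ) ≤ a ^ 2)
    calc 1 / D = a ^ 2 * (1 / (a ^ 2 * D)) := by field_simp
      _ ≤ _ := this
  linarith
end
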